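/- Given a (ℓ, L) Shamir secret sharing over a finite field F with |F| > L, any set of fewer than ℓ shares is consistent with every possible secret: for any subset S of share indices with |S| < ℓ, any assignment of share values on S, and any secret s ∈ F, there exists a polynomial of degree < ℓ with constant term s matching the given shares. -/
import Mathlib

/-- Shamir secret sharing: fewer than ℓ shares are consistent with every
secret — there is a polynomial of degree < ℓ with constant term s matching
any assignment of shares on a set S with |S| < ℓ. -/
theorem stmt_10 {F : Type*} [Field F] [Fintype F] (L ℓ : ℕ)
    (hF : L < Fintype.card F)
    (α : Fin L → F) (hinj : Function.Injective α) (hne : ∀ j, α j ≠ 0)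
    (S : Finset (Fin L)) (hS : S.card < ℓ)
    (v : Fin L → F) (s : F) :
    ∃ p : Polynomial F, p.degree < (ℓ : WithBot ℕ) ∧ p.coeff 0 = s ∧
      ∀ j ∈ S, p.eval (α j) = v j := by
  classical
  set x : Option (Fin L) → F := fun o => o.elim 0 α with hx
  set r : Option (Fin L) → F := fun o => o.elim s v with hr
  set T : Finset (Option (Fin L)) :=
    insert none (S.map ⟨some, Option.some_injective _⟩) with hT
  have hxinj : Set.InjOn x T := by
    intro a _ b _ hab
    match a, b with
    | none, none => rfl
    | none, some j => exact absurd hab.symm (hne j)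
    | some j, none => exact absurd hab (hne j)
    | some j, some k => exact congrArg some (hinj hab)
  have hcard : T.card = S.card + 1 := by
    rw [hT, Finset.card_insert_of_notMem (by simp), Finset.card_map]
  refine ⟨Lagrange.interpolate T x r, ?_, ?_, ?_⟩
  · calc (Lagrange.interpolate T x r).degree < T.card :=
          Lagrange.degree_interpolate_lt _ hxinj
      _ ≤ (ℓ : WithBot ℕ) := by exact_mod_cast Nat.cast_le.mpr (by omega : T.card ≤ ℓ)
  · have := Lagrange.eval_interpolate_at_node r hxinj
      (show none ∈ T by simp [hT])
    simpa [Polynomial.coeff_zero_eq_eval_zero, hx, hr] using this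
  · intro j hj
    have := Lagrange.eval_interpolate_at_node r hxinj
      (show some j ∈ T by simp [hT, hj])
    simpa [hx, hr] using this
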